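/- For λ < 0, the function f : ℝ → ℝ defined by f(τ) = (e^{λτ} − λτ − 1)/τ² for τ ≠ 0 and f(0) = λ²/2 is continuous and strictly decreasing on ℝ. -/

import Mathlib

open Real Filter

noncomputable def gAux (x : ℝ) : ℝ :=
  if x = 0 then 1/2 else (Real.exp x - x - 1) / x ^ 2

-- derivative of Q x = (x-1) e^x + 1 is x e^x
lemma hasDerivAt_Q (x : ℝ) :
    HasDerivAt (fun y : ℝ => (y - 1) * Real.exp y + 1) (x * Real.exp x) x := by
  have h := (((hasDerivAt_id x).sub_const 1).mul (Real.hasDerivAt_exp x)).add_const 1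
  refine h.congr_deriv ?_
  simp only [id_eq]; ring

lemma Q_pos {x : ℝ} (hx : x ≠ 0) : 0 < (x - 1) * Real.exp x + 1 := by
  set Q : ℝ → ℝ := fun y => (y - 1) * Real.exp y + 1 with hQ
  have hQ0 : Q 0 = 0 := by simp [hQ]
  have hcont : Continuous Q := by continuity
  rcases hx.lt_or_gt with h | h
  · have : StrictAntiOn Q (Set.Iic 0) := by
      apply strictAntiOn_of_deriv_neg (convex_Iic 0) hcont.continuousOn
      intro y hy
      rw [interior_Iic] at hy
      rw [(hasDerivAt_Q y).deriv]
      exact mul_neg_of_neg_of_pos hy (Real.exp_pos y)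
    have := this (Set.mem_Iic.2 h.le) (Set.mem_Iic.2 le_rfl) h
    rw [hQ0] at this; exact this
  · have : StrictMonoOn Q (Set.Ici 0) := by
      apply strictMonoOn_of_deriv_pos (convex_Ici 0) hcont.continuousOn
      intro y hy
      rw [interior_Ici] at hy
      rw [(hasDerivAt_Q y).deriv]
      exact mul_pos hy (Real.exp_pos y)
    have := this (Set.mem_Ici.2 le_rfl) (Set.mem_Ici.2 h.le) h
    rw [hQ0] at this; exact this

lemma hasDerivAt_P (x : ℝ) :
    HasDerivAt (fun y : ℝ => (y - 2) * Real.exp y + y + 2)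
      ((x - 1) * Real.exp x + 1) x := by
  have h := ((((hasDerivAt_id x).sub_const 2).mul (Real.hasDerivAt_exp x)).add
      (hasDerivAt_id x)).add_const 2
  refine h.congr_deriv ?_
  simp only [id_eq]; ring

lemma P_pos {x : ℝ} (hx : 0 < x) : 0 < (x - 2) * Real.exp x + x + 2 := by
  set P : ℝ → ℝ := fun y => (y - 2) * Real.exp y + y + 2 with hP
  have hP0 : P 0 = 0 := by simp [hP]
  have hcont : Continuous P := by continuity
  have : StrictMonoOn P (Set.Ici 0) := by
    apply strictMonoOn_of_deriv_pos (convex_Ici 0) hcont.continuousOn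
    intro y hy
    rw [interior_Ici] at hy
    rw [(hasDerivAt_P y).deriv]
    exact Q_pos (ne_of_gt hy)
  have := this (Set.mem_Ici.2 le_rfl) (Set.mem_Ici.2 hx.le) hx
  rw [hP0] at this; exact this

lemma P_neg {x : ℝ} (hx : x < 0) : (x - 2) * Real.exp x + x + 2 < 0 := by
  set P : ℝ → ℝ := fun y => (y - 2) * Real.exp y + y + 2 with hP
  have hP0 : P 0 = 0 := by simp [hP]
  have hcont : Continuous P := by continuity
  have : StrictMonoOn P (Set.Iic 0) := by
    apply strictMonoOn_of_deriv_pos (convex_Iic 0) hcont.continuousOn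
    intro y hy
    rw [interior_Iic] at hy
    rw [(hasDerivAt_P y).deriv]
    exact Q_pos (ne_of_lt hy)
  have := this (Set.mem_Iic.2 hx.le) (Set.mem_Iic.2 le_rfl) hx
  rw [hP0] at this; exact this

lemma gAux_hasDerivAt {x : ℝ} (hx : x ≠ 0) :
    HasDerivAt gAux (((x - 2) * Real.exp x + x + 2) / x ^ 3) x := by
  have hx2 : (x:ℝ) ^ 2 ≠ 0 := pow_ne_zero _ hx
  have hnum : HasDerivAt (fun y : ℝ => Real.exp y - y - 1) (Real.exp x - 1) x := by
    have := ((Real.hasDerivAt_exp x).sub (hasDerivAt_id x)).sub_const 1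
    simpa using this
  have hden : HasDerivAt (fun y : ℝ => y ^ 2) (2 * x) x := by
    simpa using hasDerivAt_pow 2 x
  have h := hnum.div hden hx2
  have heq : ((Real.exp x - 1) * x ^ 2 - (Real.exp x - x - 1) * (2 * x)) / (x ^ 2) ^ 2
      = ((x - 2) * Real.exp x + x + 2) / x ^ 3 := by
    field_simp
    ring
  rw [heq] at h
  apply h.congr_of_eventuallyEq
  filter_upwards [isOpen_ne.mem_nhds hx] with y hy
  simp [gAux, hy]

lemma gAux_continuousAt_zero : ContinuousAt gAux 0 := by
  have key : ∀ x : ℝ, |x| ≤ 1 → ‖gAux x - 1/2‖ ≤ (2/9) * |x| := by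
    intro x hx
    by_cases h : x = 0
    · simp [gAux, h]
    · have hb := Real.exp_bound hx (n := 3) (by norm_num)
      have hsum : (∑ i ∈ Finset.range 3, x ^ i / (Nat.factorial i : ℝ))
          = 1 + x + x ^ 2 / 2 := by
        norm_num [Finset.sum_range_succ, Nat.factorial]
      rw [hsum] at hb
      have hb2 : |Real.exp x - (1 + x + x ^ 2 / 2)| ≤ (2/9) * |x| ^ 3 := by
        calc |Real.exp x - (1 + x + x ^ 2 / 2)| ≤ |x| ^ 3 * (Nat.succ 3 / ((Nat.factorial 3 : ℝ) * 3)) := hb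
        _ = (2/9) * |x| ^ 3 := by norm_num [Nat.factorial]; ring
      have hx2 : (0:ℝ) < x ^ 2 := by positivity
      have : gAux x - 1/2 = (Real.exp x - (1 + x + x ^ 2 / 2)) / x ^ 2 := by
        simp only [gAux, if_neg h]
        field_simp
        ring
      rw [Real.norm_eq_abs, this, abs_div, abs_pow, sq_abs]
      rw [div_le_iff₀ hx2]
      calc |Real.exp x - (1 + x + x ^ 2 / 2)| ≤ (2/9) * |x| ^ 3 := hb2
      _ = 2/9 * |x| * x ^ 2 := by rw [pow_succ, sq_abs]; ring
  have htend : Tendsto (fun x : ℝ => gAux x - 1/2) (nhds 0) (nhds 0) := by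
    have hev : ∀ᶠ x : ℝ in nhds 0, ‖gAux x - 1/2‖ ≤ (2/9) * |x| := by
      have h1 : ∀ᶠ x : ℝ in nhds 0, |x| ≤ 1 := by
        have : Set.Icc (-1:ℝ) 1 ∈ nhds (0:ℝ) := Icc_mem_nhds (by norm_num) (by norm_num)
        filter_upwards [this] with x hx
        exact abs_le.2 ⟨hx.1, hx.2⟩
      filter_upwards [h1] with x hx using key x hx
    have h2 : Tendsto (fun x : ℝ => (2/9) * |x|) (nhds 0) (nhds 0) := by
      have : Tendsto (fun x : ℝ => (2/9) * |x|) (nhds 0) (nhds ((2/9) * |0|)) :=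
        (continuous_const.mul (continuous_abs)).tendsto 0
      simpa using this
    exact squeeze_zero_norm' hev h2
  have h3 := htend.add_const (1/2)
  simp only [sub_add_cancel, zero_add] at h3
  unfold ContinuousAt
  rw [show gAux 0 = 1/2 from if_pos rfl]
  exact h3

lemma gAux_continuous : Continuous gAux := by
  rw [continuous_iff_continuousAt]
  intro x
  by_cases h : x = 0
  · subst h; exact gAux_continuousAt_zero
  · exact (gAux_hasDerivAt h).continuousAt

lemma gAux_strictMono : StrictMono gAux := by
  have hmono : StrictMonoOn gAux (Set.Ici 0) := by
    apply strictMonoOn_of_deriv_pos (convex_Ici 0) gAux_continuous.continuousOn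
    intro y hy
    rw [interior_Ici] at hy
    rw [(gAux_hasDerivAt (ne_of_gt hy)).deriv]
    exact div_pos (P_pos hy) (pow_pos hy 3)
  have hmono' : StrictMonoOn gAux (Set.Iic 0) := by
    apply strictMonoOn_of_deriv_pos (convex_Iic 0) gAux_continuous.continuousOn
    intro y hy
    rw [interior_Iic] at hy
    rw [(gAux_hasDerivAt (ne_of_lt hy)).deriv]
    exact div_pos_of_neg_of_neg (P_neg hy) (Odd.pow_neg (by decide) hy)
  intro a b hab
  rcases le_or_gt b 0 with hb | hb
  · exact hmono' (le_of_lt (lt_of_lt_of_le hab hb)) hb hab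
  rcases le_or_gt 0 a with ha | ha
  · exact hmono ha hb.le hab
  · calc gAux a < gAux 0 := hmono' (Set.mem_Iic.2 ha.le) (Set.mem_Iic.2 le_rfl) ha
    _ < gAux b := hmono (Set.mem_Ici.2 le_rfl) (Set.mem_Ici.2 hb.le) hb

/-- For λ < 0, f(τ) = (e^{λτ} − λτ − 1)/τ² (with f(0) = λ²/2) is continuous
and strictly decreasing on ℝ. -/
theorem stmt9 (lam : ℝ) (hlam : lam < 0) (f : ℝ → ℝ)
    (hf : ∀ τ : ℝ, f τ =
      if τ = 0 then lam ^ 2 / 2 else (Real.exp (lam * τ) - lam * τ - 1) / τ ^ 2) :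
    Continuous f ∧ StrictAnti f := by
  have hlne : lam ≠ 0 := ne_of_lt hlam
  have hkey : ∀ τ : ℝ, f τ = lam ^ 2 * gAux (lam * τ) := by
    intro τ
    rw [hf τ]
    by_cases h : τ = 0
    · simp [h, gAux]
      ring
    · have hlt : lam * τ ≠ 0 := mul_ne_zero hlne h
      simp only [gAux, if_neg h, if_neg hlt]
      field_simp
  have hfeq : f = fun τ => lam ^ 2 * gAux (lam * τ) := funext hkey
  rw [hfeq]
  constructor
  · exact continuous_const.mul (gAux_continuous.comp (continuous_const.mul continuous_id))
  · intro a b hab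
    have h1 : lam * b < lam * a := by
      exact mul_lt_mul_of_neg_left hab hlam
    have h2 : gAux (lam * b) < gAux (lam * a) := gAux_strictMono h1
    have hsq : (0:ℝ) < lam ^ 2 := by positivity
    exact mul_lt_mul_of_pos_left h2 hsq
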